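/- Let π : Γ̃ → Γ be a covering of GKM graphs (a graph covering of the underlying graphs which preserves the axial functions, i.e. α̃(e) = α(π(e)), and intertwines the connections, i.e. ∇_{π(e)}(π(e')) = π(∇̃_e(e'))), and let D be a group of GKM graph automorphisms of Γ̃ commuting with π which acts transitively on each vertex fiber π⁻¹(w), w a vertex of Γ. Let D act on the group of axial functions A(Γ̃) by (g·f)_v := g_*(f_{g⁻¹v}), where g_* : ℤ star(g⁻¹v) → ℤ star(v) is induced by g, and let π* : A(Γ) → A(Γ̃) be the pullback, (π*f)_v := the element of ℤ star(v) corresponding to f_{π(v)} under the bijection star(v) → star(π(v)) induced by π. Then the image of π* equals the subgroup A(Γ̃)^D of D-invariant elements. -/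

import Mathlib

attribute [local instance] Classical.propDecidable

/-- A graph with directed edges `E`, vertices `V`, edge reversal, and a
(combinatorial) connection `conn`, where `conn e e'` is the transport of an
edge `e'` with `ini e' = ini e` along the edge `e`. -/
structure ConnGraph (V : Type*) (E : Type*) where
  ini : E → V
  ter : E → V
  rev : E → E
  rev_ini : ∀ e, ini (rev e) = ter e
  rev_ter : ∀ e, ter (rev e) = ini e
  rev_rev : ∀ e, rev (rev e) = e
  conn : E → E → E
  conn_ini : ∀ e e', ini e' = ini e → ini (conn e e') = ter e
  conn_self : ∀ e, conn e e = rev e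
  conn_inv : ∀ e e', ini e' = ini e → conn (rev e) (conn e e') = e'

namespace ConnGraph

variable {V E : Type*} (G : ConnGraph V E)

/-- One step of adjacency along an edge. -/
def Step (a b : V) : Prop := ∃ e : E, G.ini e = a ∧ G.ter e = b

/-- The graph is connected. -/
def Connected : Prop := ∀ a b : V, Relation.ReflTransGen G.Step a b

/-- The graph is `n`-valent: every star has exactly `n` edges. -/
def NValent (n : ℕ) : Prop := ∀ v : V, {e : E | G.ini e = v}.ncard = n

/-- A sign function on a graph with connection: `ε e e'` plays the role of
`⟨ε(e), e'⟩` for `e'` in the star of `ini e`. -/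
def IsSignFunction (ε : E → E → ℤ) : Prop :=
  (∀ e e' : E, G.ini e' = G.ini e → ε e e' = 1 ∨ ε e e' = -1) ∧
  (∀ e : E, ε e e = 1) ∧
  (∀ e e' : E, G.ini e' = G.ini e → ε (G.rev e) (G.conn e e') = ε e e')

/-- An invariant function (relative to a sign function): `c e e'` plays the
role of `⟨c(e), e'⟩`. -/
def IsInvariantFunction (ε c : E → E → ℤ) : Prop :=
  (∀ e : E, c e e = -2) ∧
  (∀ e e' : E, G.ini e' = G.ini e →
    c e e' = ε (G.rev e) (G.conn e e') * c (G.rev e) (G.conn e e'))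

/-- A label function: an element of the group `L(Γ)`. -/
def IsLabelFunction (ε c : E → E → ℤ) (a : E → ℤ) : Prop :=
  ∀ e e' : E, G.ini e' = G.ini e →
    a (G.conn e e') = ε e e' * a e' + c e e' * a e

/-- `x : E → ℤ` represents an element of `ℤ star(v)`:
it is supported on the star of `v`. -/
def StarSupported (v : V) (x : E → ℤ) : Prop := ∀ e : E, G.ini e ≠ v → x e = 0

/-- An element of the group of axial functions `A(Γ)`: a tuple `(f v)_{v ∈ V}`
with `f v ∈ ℤ star(v)`, satisfying `f (t e) = φ_e (f (i e))` for every edge. -/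
def IsAxialTuple (ε c : E → E → ℤ) (f : V → E → ℤ) : Prop :=
  (∀ v : V, G.StarSupported v (f v)) ∧
  (∀ e e' : E, G.ini e' = G.ini e →
    f (G.ter e) (G.conn e e') = ε e e' * f (G.ini e) e' + f (G.ini e) e * c e e')

/-- The map `φ_e : ℤ star(i e) → ℤ star(t e)`,
`φ_e(x) = ∇_e (ε(e)·x + ⟨x, e⟩·c(e))`. -/
noncomputable def phi (ε c : E → E → ℤ) (e : E) (x : E → ℤ) : E → ℤ := fun e'' =>
  if G.ini e'' = G.ter e then
    ε e (G.conn (G.rev e) e'') * x (G.conn (G.rev e) e'') +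
      x e * c e (G.conn (G.rev e) e'')
  else 0

/-- `φ_γ` for an edge path `γ = (e₁, …, e_q)`: the composite
`φ_{e_q} ∘ ⋯ ∘ φ_{e₁}`. -/
noncomputable def phiList (ε c : E → E → ℤ) : List E → (E → ℤ) → (E → ℤ)
  | [], x => x
  | e :: l, x => phiList ε c l (G.phi ε c e x)

/-- The parallel transport (monodromy) operator `Π_γ = ∇_{e_q} ∘ ⋯ ∘ ∇_{e₁}`
along an edge path, on edges. -/
def transportList : List E → E → E
  | [], x => x
  | e :: l, x => transportList l (G.conn e x)

/-- `IsPath u w l`: the list of edges `l` is an edge path from `u` to `w`. -/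
def IsPath : V → V → List E → Prop
  | u, w, [] => u = w
  | u, w, e :: l => G.ini e = u ∧ IsPath (G.ter e) w l

/-- Elementary homotopy of edge paths: deletion of a backtrack `(e, ē)`. -/
inductive HomotopyStep : List E → List E → Prop
  | backtrack (l₁ l₂ : List E) (e : E) :
      HomotopyStep (l₁ ++ e :: G.rev e :: l₂) (l₁ ++ l₂)

/-- Homotopy of edge paths: the equivalence relation generated by insertion
and deletion of backtracks. -/
def Homotopic : List E → List E → Prop := Relation.EqvGen G.HomotopyStep

/-- A 2-face: a nonempty connected 2-valent subgraph (given by its set of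
edges, closed under reversal) which is invariant under the connection. -/
def IsTwoFace (F : Set E) : Prop :=
  F.Nonempty ∧
  (∀ e ∈ F, G.rev e ∈ F) ∧
  (∀ e ∈ F, {e' : E | e' ∈ F ∧ G.ini e' = G.ini e}.ncard = 2) ∧
  (∀ e ∈ F, ∀ e' ∈ F, G.ini e' = G.ini e → G.conn e e' ∈ F) ∧
  (∀ e ∈ F, ∀ e' ∈ F, ∃ l : List E,
    (∀ x ∈ l, x ∈ F) ∧ G.IsPath (G.ini e) (G.ini e') l)

/-- `f` is a boundary cycle of the 2-face `F`, based at `w`: a closed edge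
path at `w` traversing each geometric edge of `F` exactly once. -/
def IsFaceBoundary (F : Set E) (w : V) (f : List E) : Prop :=
  G.IsTwoFace F ∧ f ≠ [] ∧ G.IsPath w w f ∧ (∀ e ∈ f, e ∈ F) ∧
  f.Nodup ∧ (∀ e ∈ f, G.rev e ∉ f) ∧ (∀ e ∈ F, e ∈ f ∨ G.rev e ∈ f)

/-- A conjugated 2-face at the base vertex `v`: a loop of the form
`g · f · g⁻¹` where `g` is an edge path from `v` and `f` is a boundary cycle
of a 2-face based at the endpoint of `g`. -/
def ConjFaceLoop (v : V) (l : List E) : Prop :=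
  ∃ (w : V) (g f : List E) (F : Set E),
    G.IsPath v w g ∧ G.IsFaceBoundary F w f ∧
    l = g ++ f ++ (g.reverse.map G.rev)

/-- The conjugated 2-faces generate the fundamental group (the edge-path
group): every closed edge path is homotopic to a concatenation of conjugated
2-face loops. -/
def FacesGeneratePi1 : Prop :=
  ∀ (v : V) (l : List E), G.IsPath v v l →
    ∃ ls : List (List E), (∀ m ∈ ls, G.ConjFaceLoop v m) ∧
      G.Homotopic l ls.flatten

end ConnGraph

/-- `(G, lab)` is an abstract unsigned GKM graph, where `lab` is a chosen lift
`α̃ : E → ℤ^k` of the unsigned axial function `α : E → ℤ^k/±1`. -/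
structure IsUnsignedGKM {V E : Type*} (G : ConnGraph V E) {k : ℕ}
    (lab : E → Fin k → ℤ) : Prop where
  connected : G.Connected
  lab_ne : ∀ e : E, lab e ≠ 0
  lab_rev : ∀ e : E, lab (G.rev e) = -lab e
  indep₂ : ∀ e e' : E, G.ini e' = G.ini e → e ≠ e' →
    LinearIndependent ℚ ![(fun j => (lab e j : ℚ)), (fun j => (lab e' j : ℚ))]
  congru : ∀ e e' : E, G.ini e' = G.ini e →
    ∃ s m : ℤ, (s = 1 ∨ s = -1) ∧ lab (G.conn e e') = s • lab e' + m • lab e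

/-- The GKM₃ condition: any three labels at a common vertex are linearly
independent over `ℚ`. -/
def IsGKM3 {V E : Type*} (G : ConnGraph V E) {k : ℕ} (lab : E → Fin k → ℤ) : Prop :=
  ∀ e₁ e₂ e₃ : E, G.ini e₂ = G.ini e₁ → G.ini e₃ = G.ini e₁ →
    e₁ ≠ e₂ → e₁ ≠ e₃ → e₂ ≠ e₃ →
    LinearIndependent ℚ
      ![(fun j => (lab e₁ j : ℚ)), (fun j => (lab e₂ j : ℚ)),
        (fun j => (lab e₃ j : ℚ))]

/-- `(ε, c)` are the sign and integer data associated to the lift `lab` of the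
axial function, via the congruence relation
`α̃(∇_e e') = ⟨ε(e),e'⟩·α̃(e') + ⟨c(e),e'⟩·α̃(e)`, normalized by
`⟨ε(e),e⟩ = 1` and `⟨c(e),e⟩ = -2`. -/
def IsCompatibleData {V E : Type*} (G : ConnGraph V E) {k : ℕ}
    (lab : E → Fin k → ℤ) (ε c : E → E → ℤ) : Prop :=
  (∀ e e' : E, G.ini e' = G.ini e → ε e e' = 1 ∨ ε e e' = -1) ∧
  (∀ e : E, ε e e = 1) ∧ (∀ e : E, c e e = -2) ∧
  (∀ e e' : E, G.ini e' = G.ini e →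
    lab (G.conn e e') = ε e e' • lab e' + c e e' • lab e)

/-- The axial function is almost effective: the `ℤ`-span of its image has
finite index in `ℤ^k`. -/
def AlmostEffective {E : Type*} {k : ℕ} (lab : E → Fin k → ℤ) : Prop :=
  (Submodule.span ℤ (Set.range lab)).toAddSubgroup.index ≠ 0

/-- The axial function is effective: the `ℤ`-span of its image is all
of `ℤ^k`. -/
def Effective {E : Type*} {k : ℕ} (lab : E → Fin k → ℤ) : Prop :=
  Submodule.span ℤ (Set.range lab) = ⊤

/-- A covering of GKM graphs: a graph covering of the underlying graphs which
preserves the (unsigned) axial functions and intertwines the connections. -/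
structure GKMCovering {V₁ E₁ V₂ E₂ : Type*} (G₁ : ConnGraph V₁ E₁)
    (G₂ : ConnGraph V₂ E₂) {k : ℕ}
    (lab₁ : E₁ → Fin k → ℤ) (lab₂ : E₂ → Fin k → ℤ) where
  vmap : V₁ → V₂
  emap : E₁ → E₂
  map_ini : ∀ e, G₂.ini (emap e) = vmap (G₁.ini e)
  map_ter : ∀ e, G₂.ter (emap e) = vmap (G₁.ter e)
  map_rev : ∀ e, emap (G₁.rev e) = G₂.rev (emap e)
  map_conn : ∀ e e', G₁.ini e' = G₁.ini e →
    emap (G₁.conn e e') = G₂.conn (emap e) (emap e')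
  vmap_surj : Function.Surjective vmap
  star_bij : ∀ v : V₁, Set.BijOn emap {e | G₁.ini e = v} {e | G₂.ini e = vmap v}
  map_lab : ∀ e, lab₁ e = lab₂ (emap e) ∨ lab₁ e = -(lab₂ (emap e))

/-- An automorphism of the covering graph commuting with the covering
projection (a deck transformation), preserving the graph structure and the
connection. -/
structure DeckTransform {V₁ E₁ V₂ E₂ : Type*} (G₁ : ConnGraph V₁ E₁)
    (vmap : V₁ → V₂) (emap : E₁ → E₂) where
  dv : V₁ ≃ V₁
  de : E₁ ≃ E₁
  d_ini : ∀ e, G₁.ini (de e) = dv (G₁.ini e)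
  d_ter : ∀ e, G₁.ter (de e) = dv (G₁.ter e)
  d_rev : ∀ e, de (G₁.rev e) = G₁.rev (de e)
  d_conn : ∀ e e', G₁.ini e' = G₁.ini e →
    de (G₁.conn e e') = G₁.conn (de e) (de e')
  over_v : ∀ v, vmap (dv v) = vmap v
  over_e : ∀ e, emap (de e) = emap e

/-- For a covering `π : Γ̃ → Γ` of GKM graphs and a group `D`
of automorphisms of `Γ̃` commuting with `π` and acting transitively on each
vertex fiber, the image of the pullback `π* : A(Γ) → A(Γ̃)` equals the
subgroup `A(Γ̃)^D` of `D`-invariant axial functions (where the data `(ε,c)` on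
`Γ̃` is the pullback of the data on `Γ`). -/
theorem pullback_image_eq_deck_invariants {V₁ E₁ V₂ E₂ : Type*} {k : ℕ}
    (G₁ : ConnGraph V₁ E₁) (G₂ : ConnGraph V₂ E₂)
    (lab₁ : E₁ → Fin k → ℤ) (lab₂ : E₂ → Fin k → ℤ)
    (h₁ : IsUnsignedGKM G₁ lab₁) (h₂ : IsUnsignedGKM G₂ lab₂)
    (pr : GKMCovering G₁ G₂ lab₁ lab₂)
    (ε c : E₂ → E₂ → ℤ) (hdata : IsCompatibleData G₂ lab₂ ε c)
    (D : Set (DeckTransform G₁ pr.vmap pr.emap))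
    (htrans : ∀ v₁ v₂ : V₁, pr.vmap v₁ = pr.vmap v₂ →
      ∃ g ∈ D, g.dv v₁ = v₂) :
    ∀ f' : V₁ → E₁ → ℤ,
      G₁.IsAxialTuple (fun e x => ε (pr.emap e) (pr.emap x))
        (fun e x => c (pr.emap e) (pr.emap x)) f' →
      ((∀ g ∈ D, (fun v e => f' (g.dv.symm v) (g.de.symm e)) = f') ↔
        (∃ f : V₂ → E₂ → ℤ, G₂.IsAxialTuple ε c f ∧
          f' = fun v e =>
            if G₁.ini e = v then f (pr.vmap v) (pr.emap e) else 0)) := by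
  classical
  intro f' hax
  -- basic facts about deck transformations
  have dini_symm : ∀ (g : DeckTransform G₁ pr.vmap pr.emap) (e : E₁),
      G₁.ini (g.de.symm e) = g.dv.symm (G₁.ini e) := by
    intro g e
    have h := g.d_ini (g.de.symm e)
    rw [Equiv.apply_symm_apply] at h
    exact ((Equiv.symm_apply_eq g.dv).mpr (by rw [← h])).symm
  have dvmap_symm : ∀ (g : DeckTransform G₁ pr.vmap pr.emap) (v : V₁),
      pr.vmap (g.dv.symm v) = pr.vmap v := by
    intro g v
    have h := g.over_v (g.dv.symm v)
    rw [Equiv.apply_symm_apply] at h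
    exact h.symm
  have demap_symm : ∀ (g : DeckTransform G₁ pr.vmap pr.emap) (e : E₁),
      pr.emap (g.de.symm e) = pr.emap e := by
    intro g e
    have h := g.over_e (g.de.symm e)
    rw [Equiv.apply_symm_apply] at h
    exact h.symm
  constructor
  · intro hinv
    -- well-definedness of the descended function
    have key : ∀ (v v₁ : V₁) (e e₁ : E₁), pr.vmap v = pr.vmap v₁ →
        G₁.ini e = v → G₁.ini e₁ = v₁ → pr.emap e = pr.emap e₁ →
        f' v e = f' v₁ e₁ := by
      intro v v₁ e e₁ hv he he₁ hmap
      obtain ⟨g, hg, hgv⟩ := htrans v v₁ hv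
      have h1 : g.dv.symm v₁ = v := by rw [← hgv, Equiv.symm_apply_apply]
      have hini : G₁.ini (g.de.symm e₁) = v := by rw [dini_symm, he₁, h1]
      have hemap : pr.emap (g.de.symm e₁) = pr.emap e := by
        rw [demap_symm, hmap]
      have heq : g.de.symm e₁ = e := (pr.star_bij v).injOn hini he hemap
      have := congrFun (congrFun (hinv g hg) v₁) e₁
      rw [h1, heq] at this
      exact this
    -- choose lifts
    have hvl : ∀ w : V₂, pr.vmap (pr.vmap_surj w).choose = w :=
      fun w => (pr.vmap_surj w).choose_spec
    set vl : V₂ → V₁ := fun w => (pr.vmap_surj w).choose with hvl_def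
    have elift : ∀ (w : V₂) (e₂ : E₂), G₂.ini e₂ = w →
        ∃ e₁ : E₁, G₁.ini e₁ = vl w ∧ pr.emap e₁ = e₂ := by
      intro w e₂ h
      have hmem : e₂ ∈ {x | G₂.ini x = pr.vmap (vl w)} := by
        simp only [Set.mem_setOf_eq, h, hvl w]
        exact (hvl w).symm
      obtain ⟨e₁, he₁, he₁'⟩ := (pr.star_bij (vl w)).surjOn hmem
      exact ⟨e₁, he₁, he₁'⟩
    set f : V₂ → E₂ → ℤ := fun w e₂ =>
      if h : G₂.ini e₂ = w then f' (vl w) (elift w e₂ h).choose else 0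
      with hf_def
    have fval : ∀ (w : V₂) (e₂ : E₂) (v : V₁) (e : E₁), pr.vmap v = w →
        G₁.ini e = v → pr.emap e = e₂ → f w e₂ = f' v e := by
      intro w e₂ v e hv he hmap
      have hini₂ : G₂.ini e₂ = w := by
        rw [← hmap, pr.map_ini, he, hv]
      rw [hf_def]
      simp only [dif_pos hini₂]
      obtain ⟨he₁, he₁'⟩ := (elift w e₂ hini₂).choose_spec
      exact key _ v _ e (by rw [hvl, ← hv]) he₁ he (by rw [he₁', hmap])
    refine ⟨f, ⟨?_, ?_⟩, ?_⟩
    · intro w e₂ hne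
      rw [hf_def]; simp only [dif_neg hne]
    · intro e₂ e₂' hini₂
      obtain ⟨e, he, hemape⟩ := elift (G₂.ini e₂) e₂ rfl
      obtain ⟨e', he', hemape'⟩ := elift (G₂.ini e₂) e₂' hini₂
      have hiee : G₁.ini e' = G₁.ini e := by rw [he, he']
      have h1 : f (G₂.ter e₂) (G₂.conn e₂ e₂') = f' (G₁.ter e) (G₁.conn e e') := by
        apply fval
        · rw [← pr.map_ter, hemape]
        · exact G₁.conn_ini e e' hiee
        · rw [pr.map_conn e e' hiee, hemape, hemape']
      have h2 : f (G₂.ini e₂) e₂' = f' (G₁.ini e) e' := by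
        apply fval
        · rw [← pr.map_ini, hemape]
        · rw [hiee]
        · exact hemape'
      have h3 : f (G₂.ini e₂) e₂ = f' (G₁.ini e) e := by
        apply fval
        · rw [← pr.map_ini, hemape]
        · rfl
        · exact hemape
      rw [h1, h2, h3]
      have := hax.2 e e' hiee
      simp only at this
      rw [hemape, hemape'] at this
      exact this
    · funext v e
      by_cases h : G₁.ini e = v
      · rw [if_pos h]
        exact (fval (pr.vmap v) (pr.emap e) v e rfl h rfl).symm
      · rw [if_neg h]
        exact hax.1 v e h
  · rintro ⟨f, hf, heq⟩ g hg
    subst heq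
    funext v e
    simp only
    have hcond : (G₁.ini (g.de.symm e) = g.dv.symm v) ↔ (G₁.ini e = v) := by
      rw [dini_symm]
      exact ⟨fun h => g.dv.symm.injective h, fun h => by rw [h]⟩
    by_cases h : G₁.ini e = v
    · rw [if_pos (hcond.mpr h), if_pos h, dvmap_symm, demap_symm]
    · rw [if_neg (fun hc => h (hcond.mp hc)), if_neg h]
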